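/- arXiv:2106.11289 — 2 statements merged into one kernel-verified Lean document; each statement's English description precedes it below -/
import Mathlib

section
/- Let Ū be a K̄-vector subspace of K̄ⁿ and let π : Kⁿ → K^d be an exhibition of Ū. Suppose x, x' ∈ Kⁿ satisfy dir(x) ⊆ Ū, dir(x') ⊆ Ū, and rv(π(x)) = rv(π(x')). Then rv(x) = rv(x'). -/
noncomputable section

open scoped Classical Pointwise

section Preamble

variable {K : Type*} [Field K] {Γ : Type*} [LinearOrderedCommGroupWithZero Γ]

instance (priority := 100) : OrderBot Γ where
  bot := 0
  bot_le _ := zero_le'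

/-- The max-valuation on `K^n`: `v(a) = maxᵢ v(aᵢ)`. -/
def vv (v : Valuation K Γ) {n : ℕ} (x : Fin n → K) : Γ :=
  Finset.univ.sup fun i => v (x i)

/-- `rvEq v x y` expresses `rv(x) = rv(y)` in `RV⁽ⁿ⁾ = Kⁿ/∼`, where
`x ∼ y` iff `v(x−y) < v(x)` or `x = y = 0`. -/
def rvEq (v : Valuation K Γ) {n : ℕ} (x y : Fin n → K) : Prop :=
  vv v (x - y) < vv v x ∨ (x = 0 ∧ y = 0)

/-- Balls in `K` (with `K` itself counting as a ball). -/
def IsBall1 (v : Valuation K Γ) (B : Set K) : Prop :=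
  B = Set.univ ∨ ∃ a : K, ∃ γ : Γ, γ ≠ 0 ∧
    (B = {x | v (x - a) < γ} ∨ B = {x | v (x - a) ≤ γ})

/-- Balls in `Kⁿ` (with `Kⁿ` itself counting as a ball). -/
def IsBall (v : Valuation K Γ) {n : ℕ} (B : Set (Fin n → K)) : Prop :=
  B = Set.univ ∨ ∃ a : Fin n → K, ∃ γ : Γ, γ ≠ 0 ∧
    (B = {x | vv v (x - a) < γ} ∨ B = {x | vv v (x - a) ≤ γ})

/-- Spherical completeness: every nonempty chain of balls in `K` has nonempty
intersection. -/
def SphericallyComplete (v : Valuation K Γ) : Prop :=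
  ∀ C : Set (Set K), C.Nonempty → (∀ B ∈ C, IsBall1 v B) → IsChain (· ⊆ ·) C →
    (⋂ B ∈ C, B).Nonempty

/-- The residue field `K̄` of the valuation ring `𝒪 = {x | v x ≤ 1}`. -/
def Kbar (v : Valuation K Γ) : Type _ :=
  IsLocalRing.ResidueField v.valuationSubring

instance (v : Valuation K Γ) : Field (Kbar v) :=
  inferInstanceAs (Field (IsLocalRing.ResidueField v.valuationSubring))

/-- The residue map `res : 𝒪 → K̄`, extended by the junk value `0` outside `𝒪`. -/
def res' (v : Valuation K Γ) (x : K) : Kbar v :=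
  if h : v x ≤ 1 then IsLocalRing.residue v.valuationSubring ⟨x, h⟩ else 0

/-- The coordinatewise residue map on `Kⁿ`. -/
def resv (v : Valuation K Γ) {n : ℕ} (x : Fin n → K) : Fin n → Kbar v :=
  fun i => res' v (x i)

/-- `res(S)` for a set `S ⊆ Kⁿ`: the set of residues of points of `S ∩ 𝒪ⁿ`. -/
def resSet (v : Valuation K Γ) {n : ℕ} (S : Set (Fin n → K)) : Set (Fin n → Kbar v) :=
  resv v '' {x ∈ S | ∀ i, v (x i) ≤ 1}

/-- `dir(x) = res(K·x) ⊆ K̄ⁿ`. -/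
def dirSet (v : Valuation K Γ) {n : ℕ} (x : Fin n → K) : Set (Fin n → Kbar v) :=
  resSet v {y | ∃ c : K, y = c • x}

/-- The coordinate projection `Kⁿ → K^d` selecting the coordinates `σ 0 < σ 1 < ⋯`. -/
def proj {A : Type*} {n d : ℕ} (σ : Fin d → Fin n) (x : Fin n → A) : Fin d → A :=
  fun k => x (σ k)

/-- `σ` (a strictly increasing selection of `d` of the `n` coordinates) is an
exhibition of the `K̄`-subspace `Ū ⊆ K̄ⁿ` if the corresponding coordinate projection
`K̄ⁿ → K̄^d` restricts to an isomorphism from `Ū` onto `K̄^d`. -/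
def IsExhibition (v : Valuation K Γ) {n d : ℕ} (σ : Fin d → Fin n)
    (Ubar : Submodule (Kbar v) (Fin n → Kbar v)) : Prop :=
  StrictMono σ ∧ Set.BijOn (proj σ) (Ubar : Set (Fin n → Kbar v)) Set.univ

/-- `affdir(C)`: the `K̄`-subspace of `K̄ⁿ` generated by all `dir(x − x')`, `x, x' ∈ C`. -/
def affdir (v : Valuation K Γ) {n : ℕ} (C : Set (Fin n → K)) :
    Submodule (Kbar v) (Fin n → Kbar v) :=
  Submodule.span (Kbar v) (⋃ x ∈ C, ⋃ x' ∈ C, dirSet v (x - x'))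

/-- A matrix has entries in the valuation ring `𝒪`. -/
def EntriesInO (v : Valuation K Γ) {n : ℕ} (M : Matrix (Fin n) (Fin n) K) : Prop :=
  ∀ i j, v (M i j) ≤ 1

/-- `M ∈ GLₙ(𝒪)`: `M` is invertible, with entries in `𝒪`, and its inverse also has
entries in `𝒪`. -/
def MemGLO (v : Valuation K Γ) {n : ℕ} (M : Matrix (Fin n) (Fin n) K) : Prop :=
  EntriesInO v M ∧ ∃ N : Matrix (Fin n) (Fin n) K,
    M * N = 1 ∧ N * M = 1 ∧ EntriesInO v N

/-- The entrywise residue matrix of `M`. -/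
def resM (v : Valuation K Γ) {n : ℕ} (M : Matrix (Fin n) (Fin n) K) :
    Matrix (Fin n) (Fin n) (Kbar v) :=
  fun i j => res' v (M i j)

/-- `DeltaLE v U W γ` expresses `Δ(U, W) ≤ γ`: for every `u ∈ U` there is `w ∈ W`
with `v(u − w) ≤ v(u)·γ`. -/
def DeltaLE (v : Valuation K Γ) {n : ℕ} (U W : Submodule K (Fin n → K)) (γ : Γ) : Prop :=
  ∀ u ∈ U, ∃ w ∈ W, vv v (u - w) ≤ vv v u * γ

/-- `IsDelta v U W γ` expresses `Δ(U, W) = γ`: `γ` is the minimum of all admissible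
bounds. -/
def IsDelta (v : Valuation K Γ) {n : ℕ} (U W : Submodule K (Fin n → K)) (γ : Γ) : Prop :=
  DeltaLE v U W γ ∧ ∀ δ : Γ, DeltaLE v U W δ → γ ≤ δ

end Preamble

variable {K : Type*} [Field K] {Γ : Type*} [LinearOrderedCommGroupWithZero Γ]

section Aux

variable (v : Valuation K Γ) {n : ℕ}

lemma le_vv {n : ℕ} (x : Fin n → K) (i : Fin n) : v (x i) ≤ vv v x :=
  Finset.le_sup (f := fun i => v (x i)) (Finset.mem_univ i)

lemma vv_le {n : ℕ} {x : Fin n → K} {γ : Γ} (h : ∀ i, v (x i) ≤ γ) : vv v x ≤ γ :=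
  Finset.sup_le fun i _ => h i

lemma vv_le_one_iff {n : ℕ} (x : Fin n → K) : vv v x ≤ 1 ↔ ∀ i, v (x i) ≤ 1 := by
  simp [vv, Finset.sup_le_iff]

lemma vv_eq_zero_iff {n : ℕ} (x : Fin n → K) : vv v x = 0 ↔ x = 0 := by
  constructor
  · intro h
    funext i
    have hi : v (x i) ≤ vv v x := le_vv v x i
    rw [h] at hi
    have : v (x i) = 0 := le_antisymm hi zero_le'
    simpa using (v.zero_iff).mp this
  · rintro rfl
    refine le_antisymm (vv_le v fun i => ?_) zero_le'
    simp

lemma exists_vv_index {n : ℕ} {x : Fin n → K} (hx : x ≠ 0) :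
    ∃ i, v (x i) = vv v x := by
  have hne : (Finset.univ : Finset (Fin n)).Nonempty := by
    rcases Nat.eq_zero_or_pos n with h | h
    · exfalso; apply hx; funext i; exact absurd i.2 (by omega)
    · exact ⟨⟨0, h⟩, Finset.mem_univ _⟩
  obtain ⟨i, _, hi⟩ := Finset.exists_mem_eq_sup Finset.univ hne fun i => v (x i)
  exact ⟨i, hi.symm⟩

lemma res'_eq_zero_iff {a : K} (ha : v a ≤ 1) : res' v a = 0 ↔ v a < 1 := by
  rw [show res' v a = IsLocalRing.residue v.valuationSubring ⟨a, ha⟩ from dif_pos ha]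
  have : (IsLocalRing.residue v.valuationSubring ⟨a, ha⟩ = 0) ↔
      (⟨a, ha⟩ : v.valuationSubring) ∈ IsLocalRing.maximalIdeal v.valuationSubring :=
    Ideal.Quotient.eq_zero_iff_mem
  refine this.trans ?_
  rw [IsLocalRing.mem_maximalIdeal, mem_nonunits_iff]
  constructor
  · intro hnu
    rcases lt_or_eq_of_le ha with h | h
    · exact h
    · exfalso
      apply hnu
      have hane : a ≠ 0 := by
        intro h0; rw [h0] at h; simp at h
      have hinv : v a⁻¹ ≤ 1 := by
        rw [map_inv₀, h]; simp
      refine IsUnit.of_mul_eq_one (⟨a⁻¹, hinv⟩ : v.valuationSubring) ?_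
      ext
      simpa using mul_inv_cancel₀ hane
  · intro hlt hu
    obtain ⟨b, hb⟩ := isUnit_iff_exists_inv.mp hu
    have hprod : ((⟨a, ha⟩ * b : v.valuationSubring) : K) = 1 := by rw [hb]; rfl
    have h1 : v a * v (b : K) = 1 := by
      rw [← v.map_mul]
      rw [show (a : K) * (b : K) = ((⟨a, ha⟩ * b : v.valuationSubring) : K) from rfl, hprod,
        v.map_one]
    have h2 : v a * v (b : K) < 1 :=
      lt_of_le_of_lt (by calc v a * v (b : K) ≤ v a * 1 := mul_le_mul_right b.2 _
                           _ = v a := mul_one _) hlt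
    rw [h1] at h2
    exact lt_irrefl _ h2

lemma res'_sub {a b : K} (ha : v a ≤ 1) (hb : v b ≤ 1) :
    res' v (a - b) = res' v a - res' v b := by
  have hab : v (a - b) ≤ 1 := le_trans (v.map_sub a b) (max_le ha hb)
  rw [show res' v a = IsLocalRing.residue v.valuationSubring ⟨a, ha⟩ from dif_pos ha,
    show res' v b = IsLocalRing.residue v.valuationSubring ⟨b, hb⟩ from dif_pos hb,
    show res' v (a - b) = IsLocalRing.residue v.valuationSubring ⟨a - b, hab⟩ from dif_pos hab]
  have : (⟨a - b, hab⟩ : v.valuationSubring) = ⟨a, ha⟩ - ⟨b, hb⟩ := rfl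
  rw [this, map_sub]
  rfl

lemma dirSet_mem {x y : Fin n → K} (c : K) (hy : y = c • x) (hb : ∀ i, v (y i) ≤ 1) :
    resv v y ∈ dirSet v x :=
  ⟨y, ⟨⟨c, hy⟩, hb⟩, rfl⟩

/-- Key lemma: the projection does not decrease the valuation of `x - x'`
when directions lie in the exhibited subspace. -/
lemma key_vv_proj {d : ℕ}
    (Ubar : Submodule (Kbar v) (Fin n → Kbar v))
    (σ : Fin d → Fin n) (hσ : IsExhibition v σ Ubar)
    (x x' : Fin n → K)
    (hx : dirSet v x ⊆ (Ubar : Set (Fin n → Kbar v)))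
    (hx' : dirSet v x' ⊆ (Ubar : Set (Fin n → Kbar v)))
    (hle : vv v x ≤ vv v (x - x')) (hle' : vv v x' ≤ vv v (x - x'))
    (hz : x - x' ≠ 0) :
    vv v (proj σ (x - x')) = vv v (x - x') := by
  set z := x - x' with hzdef
  have hvz : vv v z ≠ 0 := fun h => hz ((vv_eq_zero_iff v z).mp h)
  obtain ⟨i, hi⟩ := exists_vv_index v hz
  set c : K := (z i)⁻¹ with hcdef
  have hzi : v (z i) ≠ 0 := by rw [hi]; exact hvz
  have hvc : v c = (vv v z)⁻¹ := by rw [hcdef, map_inv₀, hi]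
  have hvc0 : v c ≠ 0 := by rw [hvc]; exact inv_ne_zero hvz
  have hcmul : v c * vv v z = 1 := by rw [hvc]; exact inv_mul_cancel₀ hvz
  -- bounds for c • x and c • x'
  have hbx : ∀ j, v ((c • x) j) ≤ 1 := fun j => by
    have : v (x j) ≤ vv v z := le_trans (le_vv v x j) hle
    calc v ((c • x) j) = v c * v (x j) := by simp [mul_comm]
      _ ≤ v c * vv v z := mul_le_mul_right this _
      _ = 1 := hcmul
  have hbx' : ∀ j, v ((c • x') j) ≤ 1 := fun j => by
    have : v (x' j) ≤ vv v z := le_trans (le_vv v x' j) hle'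
    calc v ((c • x') j) = v c * v (x' j) := by simp [mul_comm]
      _ ≤ v c * vv v z := mul_le_mul_right this _
      _ = 1 := hcmul
  have hbz : ∀ j, v ((c • z) j) ≤ 1 := fun j => by
    have : (c • z) j = (c • x) j - (c • x') j := by
      simp [hzdef, mul_sub]
    rw [this]
    exact le_trans (v.map_sub _ _) (max_le (hbx j) (hbx' j))
  -- resv (c • z) ∈ Ubar
  have hmx : resv v (c • x) ∈ Ubar := hx (dirSet_mem v c rfl hbx)
  have hmx' : resv v (c • x') ∈ Ubar := hx' (dirSet_mem v c rfl hbx')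
  have hsub : resv v (c • z) = resv v (c • x) - resv v (c • x') := by
    funext j
    have : (c • z) j = (c • x) j - (c • x') j := by simp [hzdef, mul_sub]
    simp only [resv, this, Pi.sub_apply]
    exact res'_sub v (hbx j) (hbx' j)
  have hmz : resv v (c • z) ∈ Ubar := by
    rw [hsub]; exact Submodule.sub_mem _ hmx hmx'
  -- resv (c • z) ≠ 0
  have hvczi : v ((c • z) i) = 1 := by
    have : v ((c • z) i) = v c * v (z i) := by simp [mul_comm]
    rw [this, hi]; exact hcmul
  have hnz : resv v (c • z) ≠ 0 := by
    intro h0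
    have : res' v ((c • z) i) = 0 := by
      have := congrFun h0 i; simpa [resv] using this
    rw [res'_eq_zero_iff v (le_of_eq hvczi), hvczi] at this
    exact lt_irrefl _ this
  -- ≤ direction
  have hle2 : vv v (proj σ z) ≤ vv v z :=
    vv_le v fun k => le_vv v z (σ k)
  refine le_antisymm hle2 (not_lt.mp ?_)
  intro hlt
  -- then proj σ (resv (c • z)) = 0
  have hproj0 : proj σ (resv v (c • z)) = 0 := by
    funext k
    have h1 : v (z (σ k)) ≤ vv v (proj σ z) := le_vv v (proj σ z) k
    have h2 : v ((c • z) (σ k)) < 1 := by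
      have : v ((c • z) (σ k)) = v c * v (z (σ k)) := by simp [mul_comm]
      rw [this, ← hcmul]
      exact mul_lt_mul_of_pos_left (lt_of_le_of_lt h1 hlt) (zero_lt_iff.mpr hvc0)
    show res' v ((c • z) (σ k)) = 0
    exact (res'_eq_zero_iff v (le_of_lt h2)).mpr h2
  have h0mem : (0 : Fin n → Kbar v) ∈ (Ubar : Set (Fin n → Kbar v)) := Ubar.zero_mem
  have hproj00 : proj σ (0 : Fin n → Kbar v) = 0 := by funext k; rfl
  have := hσ.2.injOn hmz h0mem (by rw [hproj0, hproj00])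
  exact hnz this

/-- If `dir x ⊆ Ū` and `x ≠ 0` then `vv (proj σ x) = vv x`. -/
lemma key_vv_proj_single {d : ℕ}
    (Ubar : Submodule (Kbar v) (Fin n → Kbar v))
    (σ : Fin d → Fin n) (hσ : IsExhibition v σ Ubar)
    (x : Fin n → K)
    (hx : dirSet v x ⊆ (Ubar : Set (Fin n → Kbar v)))
    (hne : x ≠ 0) :
    vv v (proj σ x) = vv v x := by
  have h0 : dirSet v (0 : Fin n → K) ⊆ (Ubar : Set (Fin n → Kbar v)) := by
    rintro y ⟨w, ⟨⟨c, hw⟩, -⟩, rfl⟩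
    have : w = 0 := by rw [hw]; simp
    subst this
    have : resv v (0 : Fin n → K) = 0 := by
      funext j
      show res' v (0 : K) = 0
      rw [show res' v (0:K) = IsLocalRing.residue v.valuationSubring ⟨(0:K), (by simp : v (0:K) ≤ 1)⟩
        from dif_pos (by simp : v (0:K) ≤ 1)]
      have : (⟨(0:K), by simp⟩ : v.valuationSubring) = 0 := rfl
      rw [this, map_zero]
      rfl
    rw [this]
    exact Ubar.zero_mem
  have := key_vv_proj v Ubar σ hσ x 0 hx h0 (by rw [sub_zero]) (by
      rw [sub_zero]
      rw [show vv v (0 : Fin n → K) = 0 from (vv_eq_zero_iff v 0).mpr rfl]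
      exact zero_le') (by rwa [sub_zero])
  rwa [sub_zero] at this

end Aux

/-- if `dir x, dir x' ⊆ Ū`, `π` is an exhibition of `Ū`, and
`rv(π x) = rv(π x')`, then `rv x = rv x'`. -/
theorem rv_eq_of_proj_rv_eq
    (v : Valuation K Γ) {n d : ℕ}
    (Ubar : Submodule (Kbar v) (Fin n → Kbar v))
    (σ : Fin d → Fin n) (hσ : IsExhibition v σ Ubar)
    (x x' : Fin n → K)
    (hx : dirSet v x ⊆ (Ubar : Set (Fin n → Kbar v)))
    (hx' : dirSet v x' ⊆ (Ubar : Set (Fin n → Kbar v)))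
    (hproj : rvEq v (proj σ x) (proj σ x')) :
    rvEq v x x' := by
  rcases hproj with h | ⟨hpx, hpx'⟩
  · -- v(πx − πx') < v(πx)
    left
    have hpxne : vv v (proj σ x) ≠ 0 := fun h0 => by
      rw [h0] at h; exact absurd h (by simp)
    have hxne : x ≠ 0 := by
      rintro rfl
      apply hpxne
      have : proj σ (0 : Fin n → K) = 0 := by funext k; rfl
      rw [this]
      exact (vv_eq_zero_iff v 0).mpr rfl
    have hvx0 : vv v x ≠ 0 := fun h0 => hxne ((vv_eq_zero_iff v x).mp h0)
    by_cases hxx : x = x'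
    · subst hxx
      rw [show x - x = 0 from sub_self x, (vv_eq_zero_iff v 0).mpr rfl]
      exact lt_of_le_of_ne zero_le' (Ne.symm hvx0)
    · have hzne : x - x' ≠ 0 := sub_ne_zero.mpr hxx
      by_contra hcon
      push_neg at hcon
      -- hcon : vv v x ≤ vv v (x - x')
      have hle' : vv v x' ≤ vv v (x - x') := by
        refine vv_le v fun j => ?_
        have hj : x' j = x j - (x - x') j := by simp
        rw [hj]
        exact le_trans (v.map_sub _ _) (max_le
          (le_trans (le_vv v x j) hcon)
          (le_vv v (x - x') j))
      have hkey := key_vv_proj v Ubar σ hσ x x' hx hx' hcon hle' hzne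
      have hkeyx := key_vv_proj_single v Ubar σ hσ x hx hxne
      have hpeq : proj σ (x - x') = proj σ x - proj σ x' := by funext k; rfl
      rw [hpeq] at hkey
      -- h : vv (proj x - proj x') < vv (proj x) = vv x ≤ vv (x - x') = vv (proj x - proj x')
      rw [hkey, hkeyx] at h
      exact absurd hcon (not_le.mpr h)
  · -- πx = πx' = 0, so x = x' = 0
    right
    constructor
    · by_contra hxne
      have := key_vv_proj_single v Ubar σ hσ x hx hxne
      rw [hpx, (vv_eq_zero_iff v 0).mpr rfl] at this
      exact hxne ((vv_eq_zero_iff v x).mp this.symm)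
    · by_contra hxne
      have := key_vv_proj_single v Ubar σ hσ x' hx' hxne
      rw [hpx', (vv_eq_zero_iff v 0).mpr rfl] at this
      exact hxne ((vv_eq_zero_iff v x').mp this.symm)

end
end

section
/- Let {e₁,…,eₙ} be the standard basis of Kⁿ and let W ⊆ Kⁿ be a d-dimensional K-subspace such that res(W) = span_{K̄}(ē₁,…,ē_d), where ē_k = res(e_k). Then W has a basis (w_k)_{1 ≤ k ≤ d} with w_k ∈ e_k + ({0}^d × 𝔪^{n−d}) for each k. -/
noncomputable section

open scoped Classical Pointwise

variable {K : Type*} [Field K] {Γ : Type*} [LinearOrderedCommGroupWithZero Γ]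

theorem aux_integers (v : Valuation K Γ) : v.Integers v.valuationSubring :=
  { hom_inj := Subtype.coe_injective
    map_le_one := fun r => r.2
    exists_of_le_one := fun r hr => ⟨⟨r, hr⟩, rfl⟩ }

theorem aux_residue_eq_zero_iff (v : Valuation K Γ) (x : v.valuationSubring) :
    IsLocalRing.residue v.valuationSubring x = (0 : Kbar v) ↔ v (x : K) < 1 := by
  have h1 : IsLocalRing.residue v.valuationSubring x = (0 : Kbar v) ↔
      x ∈ IsLocalRing.maximalIdeal v.valuationSubring := by
    exact Ideal.Quotient.eq_zero_iff_mem
  rw [h1, IsLocalRing.mem_maximalIdeal, mem_nonunits_iff,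
    (aux_integers v).isUnit_iff_valuation_eq_one]
  have h2 : algebraMap v.valuationSubring K x = (x : K) := rfl
  rw [h2]
  exact ⟨fun h => lt_of_le_of_ne x.2 h, fun h => ne_of_lt h⟩

theorem aux_res'_eq (v : Valuation K Γ) {x : K} (h : v x ≤ 1) :
    res' v x = IsLocalRing.residue v.valuationSubring ⟨x, h⟩ := by
  rw [res']; exact dif_pos h

theorem aux_res'_eq_zero_iff (v : Valuation K Γ) {x : K} (h : v x ≤ 1) :
    res' v x = 0 ↔ v x < 1 := by
  rw [aux_res'_eq v h]; exact aux_residue_eq_zero_iff v ⟨x, h⟩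

/-- Elements of the span of the first `d` residue basis vectors vanish in
coordinates `≥ d`. -/
theorem aux_span_coord_zero (v : Valuation K Γ) {n d : ℕ} (hdn : d ≤ n)
    (x : Fin n → Kbar v)
    (hx : x ∈ Submodule.span (Kbar v)
      (Set.range fun k : Fin d =>
        (Pi.single (Fin.castLE hdn k) 1 : Fin n → Kbar v)))
    (j : Fin n) (hj : d ≤ (j : ℕ)) : x j = 0 := by
  induction hx using Submodule.span_induction with
  | mem y hy =>
    obtain ⟨k, rfl⟩ := hy
    have hne : j ≠ Fin.castLE hdn k := by
      intro h
      have : (j : ℕ) = (k : ℕ) := by rw [h]; rfl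
      omega
    simp [Pi.single_apply, hne]
  | zero => rfl
  | add y z _ _ hy hz => simp [hy, hz]
  | smul c y _ hy => simp [hy]

/-- a `d`-dimensional subspace `W ⊆ Kⁿ` whose residue is spanned by
the residues of the first `d` standard basis vectors has a basis `(wₖ)` with
`wₖ ∈ eₖ + ({0}^d × 𝔪^{n−d})`. -/
theorem exists_nice_basis
    (v : Valuation K Γ) {n d : ℕ} (hdn : d ≤ n)
    (W : Submodule K (Fin n → K)) (hWd : Module.finrank K W = d)
    (hres : resSet v (W : Set (Fin n → K)) =
      ↑(Submodule.span (Kbar v)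
        (Set.range fun k : Fin d =>
          (Pi.single (Fin.castLE hdn k) 1 : Fin n → Kbar v)))) :
    ∃ w : Fin d → Fin n → K,
      (∀ k, w k ∈ W) ∧ LinearIndependent K w ∧
      Submodule.span K (Set.range w) = W ∧
      ∀ k : Fin d, ∀ j : Fin n,
        ((j : ℕ) < d → w k j = if (j : ℕ) = (k : ℕ) then 1 else 0) ∧
        (d ≤ (j : ℕ) → v (w k j) < 1) := by
  classical
  set O := v.valuationSubring
  -- Step A: pick preimages of the residue basis vectors
  have hA : ∀ k : Fin d, ∃ u : Fin n → K, u ∈ W ∧ (∀ i, v (u i) ≤ 1) ∧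
      resv v u = Pi.single (Fin.castLE hdn k) 1 := by
    intro k
    have : (Pi.single (Fin.castLE hdn k) 1 : Fin n → Kbar v) ∈
        resSet v (W : Set (Fin n → K)) := by
      rw [hres]
      exact Submodule.subset_span ⟨k, rfl⟩
    obtain ⟨u, ⟨huW, hu1⟩, hur⟩ := this
    exact ⟨u, huW, hu1, hur⟩
  choose u huW hu1 hures using hA
  -- valuation of coordinates `≥ d` is `< 1`
  have huj : ∀ (l : Fin d) (j : Fin n), d ≤ (j : ℕ) → v (u l j) < 1 := by
    intro l j hj
    have h0 : resv v (u l) j = 0 := by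
      rw [hures l]
      have hne : j ≠ Fin.castLE hdn l := by
        intro h
        have : (j : ℕ) = (l : ℕ) := by rw [h]; rfl
        omega
      simp [Pi.single_apply, hne]
    exact (aux_res'_eq_zero_iff v (hu1 l j)).mp h0
  -- Step B: the d×d matrix of the first d coordinates
  set A : Matrix (Fin d) (Fin d) O := fun k l => ⟨u k (Fin.castLE hdn l), hu1 k _⟩ with hAdef
  have hAres : (IsLocalRing.residue O).mapMatrix A = 1 := by
    ext k l
    have : (IsLocalRing.residue O).mapMatrix A k l = res' v (u k (Fin.castLE hdn l)) := by
      rw [aux_res'_eq v (hu1 k (Fin.castLE hdn l))]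
      rfl
    rw [this]
    have h2 : res' v (u k (Fin.castLE hdn l)) = resv v (u k) (Fin.castLE hdn l) := rfl
    rw [h2, hures k, Matrix.one_apply, Pi.single_apply]
    by_cases hkl : k = l
    · simp [hkl]; rfl
    · have : Fin.castLE hdn l ≠ Fin.castLE hdn k := by
        simpa [Fin.castLE_inj] using fun h => hkl h.symm
      simp [hkl, this]; rfl
  -- Step C: A is invertible over O
  have hdet : IsLocalRing.residue O A.det = 1 := by
    rw [RingHom.map_det, hAres, Matrix.det_one]
  have hdetU : IsUnit A.det := by
    by_contra h
    have : A.det ∈ IsLocalRing.maximalIdeal O := (IsLocalRing.mem_maximalIdeal _).mpr h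
    have : IsLocalRing.residue O A.det = 0 := Ideal.Quotient.eq_zero_iff_mem.mpr this
    rw [hdet] at this
    exact one_ne_zero this
  have hAunit : IsUnit A := A.isUnit_iff_isUnit_det.mpr hdetU
  set B : Matrix (Fin d) (Fin d) O := ↑hAunit.unit⁻¹ with hBdef
  have hBA : B * A = 1 := by
    have := hAunit.unit.inv_mul
    rwa [IsUnit.unit_spec] at this
  -- Step D: the basis
  set w : Fin d → Fin n → K := fun k j => ∑ l, (B k l : K) * u l j with hwdef
  have hw_smul : ∀ k, w k = ∑ l, (B k l : K) • u l := by
    intro k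
    ext j
    simp [hwdef, Finset.sum_apply]
  have hw_mem : ∀ k, w k ∈ W := by
    intro k
    rw [hw_smul k]
    exact Submodule.sum_mem _ fun l _ => Submodule.smul_mem _ _ (huW l)
  have hw1 : ∀ (k : Fin d) (j : Fin n), (j : ℕ) < d →
      w k j = if (j : ℕ) = (k : ℕ) then 1 else 0 := by
    intro k j hj
    set j' : Fin d := ⟨(j : ℕ), hj⟩ with hj'def
    have hjj : j = Fin.castLE hdn j' := by
      apply Fin.ext; rfl
    have h1 : w k j = ((B * A) k j' : K) := by
      rw [Matrix.mul_apply]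
      push_cast
      rw [hwdef]
      simp only [hjj]
      rfl
    rw [h1, hBA, Matrix.one_apply]
    by_cases h : (j : ℕ) = (k : ℕ)
    · have hk : k = j' := Fin.ext h.symm
      rw [if_pos hk, if_pos h]; rfl
    · have hk : k ≠ j' := fun hk => h ((congrArg Fin.val hk).symm)
      rw [if_neg hk, if_neg h]; rfl
  have hw2 : ∀ (k : Fin d) (j : Fin n), d ≤ (j : ℕ) → v (w k j) < 1 := by
    intro k j hj
    rw [hwdef]
    refine v.map_sum_lt one_ne_zero fun l _ => ?_
    rw [v.map_mul]
    calc v ((B k l : K)) * v (u l j) ≤ 1 * v (u l j) :=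
          mul_le_mul_left (B k l).2 _
      _ = v (u l j) := one_mul _
      _ < 1 := huj l j hj
  -- linear independence
  have hwli : LinearIndependent K w := by
    apply LinearIndependent.of_comp (LinearMap.funLeft K K (Fin.castLE hdn))
    have hcomp : (LinearMap.funLeft K K (Fin.castLE hdn)) ∘ w =
        fun k : Fin d => (Pi.single k 1 : Fin d → K) := by
      funext k
      ext j
      have := hw1 k (Fin.castLE hdn j) (by simpa using j.2)
      simp only [Function.comp_apply, LinearMap.funLeft_apply]
      rw [this, Pi.single_apply]
      have : ((Fin.castLE hdn j : Fin n) : ℕ) = (j : ℕ) := rfl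
      rw [this]
      by_cases hjk : j = k
      · simp [hjk]
      · have : (j : ℕ) ≠ (k : ℕ) := fun h => hjk (Fin.ext h)
        simp [hjk, this]
    rw [hcomp]
    have := (Pi.basisFun K (Fin d)).linearIndependent
    convert this using 1
    funext k
    simp [Pi.basisFun_apply]
  -- span
  have hspan : Submodule.span K (Set.range w) = W := by
    apply le_antisymm
    · rw [Submodule.span_le]
      rintro _ ⟨k, rfl⟩
      exact hw_mem k
    · intro x hx
      set y : Fin n → K := x - ∑ k, x (Fin.castLE hdn k) • w k with hydef
      have hyW : y ∈ W := by
        apply Submodule.sub_mem _ hx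
        exact Submodule.sum_mem _ fun k _ => Submodule.smul_mem _ _ (hw_mem k)
      have hyfirst : ∀ k : Fin d, y (Fin.castLE hdn k) = 0 := by
        intro k
        have hsum : (∑ k' : Fin d, x (Fin.castLE hdn k') • w k') (Fin.castLE hdn k)
            = x (Fin.castLE hdn k) := by
          rw [Finset.sum_apply]
          have h1 : ∀ k' : Fin d, (x (Fin.castLE hdn k') • w k') (Fin.castLE hdn k)
              = if k' = k then x (Fin.castLE hdn k) else 0 := by
            intro k'
            have := hw1 k' (Fin.castLE hdn k) (by simpa using k.2)
            rw [Pi.smul_apply, this, smul_eq_mul]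
            have hco : ((Fin.castLE hdn k : Fin n) : ℕ) = (k : ℕ) := rfl
            rw [hco]
            by_cases hkk : k' = k
            · simp [hkk]
            · have : (k : ℕ) ≠ (k' : ℕ) := fun h => hkk (Fin.ext h.symm)
              simp [hkk, this]
          simp only [h1]
          simp
        rw [hydef]
        simp [hsum]
      have hy0 : y = 0 := by
        by_contra hy
        obtain ⟨i, hi⟩ : ∃ i, y i ≠ 0 := by
          by_contra h
          push_neg at h
          exact hy (funext h)
        have hNE : (Finset.univ : Finset (Fin n)).Nonempty := ⟨i, Finset.mem_univ i⟩
        obtain ⟨i₀, _, hi₀⟩ := Finset.exists_mem_eq_sup' hNE (fun i => v (y i))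
        have hle : ∀ i', v (y i') ≤ v (y i₀) := by
          intro i'
          rw [← hi₀]
          exact Finset.le_sup' (f := fun i => v (y i)) (Finset.mem_univ i')
        have hne0 : v (y i₀) ≠ 0 := by
          intro h
          have := hle i
          rw [h, le_zero_iff, Valuation.zero_iff] at this
          exact hi this
        set c : K := (y i₀)⁻¹ with hcdef
        have hvc : v c = (v (y i₀))⁻¹ := by
          rw [hcdef, map_inv₀]
        have hz1 : ∀ i', v ((c • y) i') ≤ 1 := by
          intro i'
          rw [Pi.smul_apply, smul_eq_mul, v.map_mul, hvc]
          calc (v (y i₀))⁻¹ * v (y i') ≤ (v (y i₀))⁻¹ * v (y i₀) :=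
                mul_le_mul_right (hle i') _
            _ = 1 := inv_mul_cancel₀ hne0
        have hzW : c • y ∈ W := Submodule.smul_mem _ _ hyW
        have hmem : resv v (c • y) ∈ resSet v (W : Set (Fin n → K)) :=
          ⟨c • y, ⟨hzW, hz1⟩, rfl⟩
        rw [hres] at hmem
        -- i₀ has index ≥ d since y vanishes on the first d coordinates
        have hd : d ≤ (i₀ : ℕ) := by
          by_contra h
          push_neg at h
          have : y i₀ = 0 := by
            have := hyfirst ⟨(i₀ : ℕ), h⟩
            have hcast : Fin.castLE hdn ⟨(i₀ : ℕ), h⟩ = i₀ := by apply Fin.ext; rfl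
            rwa [hcast] at this
          rw [this, v.map_zero] at hne0
          exact hne0 rfl
        have hzero : resv v (c • y) i₀ = 0 :=
          aux_span_coord_zero v hdn _ hmem i₀ hd
        have hv1 : v ((c • y) i₀) = 1 := by
          rw [Pi.smul_apply, smul_eq_mul, v.map_mul, hvc]
          exact inv_mul_cancel₀ hne0
        have : res' v ((c • y) i₀) = 0 := hzero
        rw [aux_res'_eq_zero_iff v (le_of_eq hv1), hv1] at this
        exact absurd this (lt_irrefl 1)
      have hxeq : x = ∑ k, x (Fin.castLE hdn k) • w k := by
        have h := hy0
        rw [hydef] at h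
        exact sub_eq_zero.mp h
      rw [hxeq]
      exact Submodule.sum_mem _ fun k _ =>
        Submodule.smul_mem _ _ (Submodule.subset_span ⟨k, rfl⟩)
  exact ⟨w, hw_mem, hwli, hspan, fun k j => ⟨hw1 k j, hw2 k j⟩⟩

end
end
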